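/- Let c' be the 2-edge-colouring of K_3 on vertex set {1,2,3} with colour 1 on the pairs {1,2} and {2,3} and colour 2 on the pair {1,3}. Then for every n ≥ 1, every 3-edge-colouring of K_n with colours {1,2,3} that contains no copy of c' (no three vertices two of whose pairs are coloured 1 and the third coloured 2) has a set of at least n^{1/2} vertices on which at most two of the three colours appear; in particular h_3(n, c') ≥ n^{1/2}. -/

import Mathlib

/-- A set `X` is homogeneous for an edge-colouring `c` of `K_n` with colours in `Fin s`
if some colour does not appear on pairs of distinct elements of `X`. -/
def IsHomog {n s : ℕ} (c : Sym2 (Fin n) → Fin s) (X : Finset (Fin n)) : Prop :=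
  ∃ i : Fin s, ∀ x ∈ X, ∀ y ∈ X, x ≠ y → c s(x, y) ≠ i

/-- `c` contains a copy of the pattern `c'` (colours compared via their indices). -/
def HasCopy {n s k s' : ℕ} (c : Sym2 (Fin n) → Fin s) (c' : Sym2 (Fin k) → Fin s') : Prop :=
  ∃ φ : Fin k ↪ Fin n, ∀ x y : Fin k, x ≠ y →
    ((c s(φ x, φ y) : ℕ) = (c' s(x, y) : ℕ))

/-- The 2-edge-colouring of `K_3` with colour `0` on the pairs `{0,1}` and
`{1,2}` and colour `1` on the pair `{0,2}`. -/
def cCherry : Sym2 (Fin 3) → Fin 2 := fun e =>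
  if e = s((0 : Fin 3), (2 : Fin 3)) then 1 else 0

lemma key {n : ℕ} {c : Sym2 (Fin n) → Fin 3} (h : ¬ HasCopy c cCherry)
    {a b v : Fin n} (hab : a ≠ b) (hbv : b ≠ v) (hav : a ≠ v)
    (h1 : c s(a,b) = 0) (h2 : c s(b,v) = 0) : c s(a,v) ≠ 1 := by
  intro h3
  apply h
  refine ⟨⟨![a,b,v], ?_⟩, ?_⟩
  · intro x y hxy
    fin_cases x <;> fin_cases y <;> simp_all
  · intro x y hxy
    have h1' : c s(b,a) = 0 := by rw [Sym2.eq_swap]; exact h1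
    have h2' : c s(v,b) = 0 := by rw [Sym2.eq_swap]; exact h2
    have h3' : c s(v,a) = 1 := by rw [Sym2.eq_swap]; exact h3
    change ((c s(![a,b,v] x, ![a,b,v] y) : ℕ) = _)
    fin_cases x <;> fin_cases y <;> simp_all [cCherry]

lemma greedy {n s : ℕ} (c : Sym2 (Fin n) → Fin 3) (hs : 1 ≤ s)
    (hdeg : ∀ x : Fin n,
      (Finset.univ.filter (fun u => u ≠ x ∧ c s(x,u) = 0)).card + 1 ≤ s) :
    ∀ m : ℕ, ∀ T : Finset (Fin n), T.card ≤ m →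
      ∃ S ⊆ T, (∀ x ∈ S, ∀ y ∈ S, x ≠ y → c s(x,y) ≠ 0) ∧ T.card ≤ s * S.card := by
  intro m
  induction m with
  | zero => intro T hT; exact ⟨∅, Finset.empty_subset _, by simp, by simpa using hT⟩
  | succ m ih =>
    intro T hT
    rcases T.eq_empty_or_nonempty with rfl | ⟨x, hx⟩
    · exact ⟨∅, Finset.empty_subset _, by simp, by simp⟩
    · set B : Finset (Fin n) := insert x (Finset.univ.filter (fun u => u ≠ x ∧ c s(x,u) = 0)) with hB
      have hBcard : B.card ≤ s := by
        calc B.card ≤ _ + 1 := Finset.card_insert_le _ _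
        _ ≤ s := by have := hdeg x; omega
      set T' := T \ B with hT'
      have hT'sub : T' ⊆ T := Finset.sdiff_subset
      have hxT' : x ∉ T' := by simp [hT', hB]
      have hT'lt : T'.card < T.card := Finset.card_lt_card ⟨hT'sub, fun hsub => hxT' (hsub hx)⟩
      obtain ⟨S', hS'sub, hS'ind, hS'card⟩ := ih T' (by omega)
      refine ⟨insert x S', ?_, ?_, ?_⟩
      · intro y hy
        rcases Finset.mem_insert.mp hy with rfl | hy
        · exact hx
        · exact hT'sub (hS'sub hy)
      · intro a ha b hb hab
        have notB : ∀ y ∈ S', y ≠ x → c s(x, y) ≠ 0 := by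
          intro y hy hyx hc0
          have : y ∉ B := (Finset.mem_sdiff.mp (hS'sub hy)).2
          exact this (by simp [hB, Finset.mem_insert, hyx, hc0])
        rcases Finset.mem_insert.mp ha with ha' | ha'
        · rcases Finset.mem_insert.mp hb with hb' | hb'
          · exact absurd (ha'.trans hb'.symm) hab
          · subst ha'; exact notB b hb' (fun h => hab h.symm)
          -- a = x, b ∈ S'
        · rcases Finset.mem_insert.mp hb with hb' | hb'
          · subst hb'
            intro hc0
            exact notB a ha' hab (by rw [Sym2.eq_swap]; exact hc0)
          · exact hS'ind a ha' b hb' hab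
      · have hxS' : x ∉ S' := fun hxS' => hxT' (hS'sub hxS')
        rw [Finset.card_insert_of_notMem hxS', Nat.mul_add, Nat.mul_one]
        have : T.card ≤ T'.card + B.card := by
          have := Finset.card_sdiff_add_card_eq_card (Finset.inter_subset_left (s₂ := B) (s₁ := T))
          calc T.card ≤ (T \ (T ∩ B)).card + (T ∩ B).card := by
                rw [Finset.card_sdiff_add_card_eq_card Finset.inter_subset_left]
          _ ≤ T'.card + B.card := by
                have h1 : T \ (T ∩ B) = T' := by rw [hT', Finset.sdiff_inter_self_left]
                exact Nat.add_le_add (le_of_eq (by rw [h1])) (Finset.card_le_card Finset.inter_subset_right)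
        omega

theorem stmt16 :
    ∀ n : ℕ, 1 ≤ n → ∀ c : Sym2 (Fin n) → Fin 3, ¬ HasCopy c cCherry →
      ∃ X : Finset (Fin n), IsHomog c X ∧ (n : ℝ) ^ ((1 : ℝ) / 2) ≤ (X.card : ℝ) := by
  intro n hn c hcopy
  rw [show ((n : ℝ) ^ ((1 : ℝ)/2) = Real.sqrt n) from (Real.sqrt_eq_rpow _).symm]
  set s := Nat.sqrt n with hsdef
  have hs1 : 1 ≤ s := Nat.sqrt_pos.mpr hn
  by_cases hbig : ∃ x : Fin n, s ≤ (Finset.univ.filter (fun u => u ≠ x ∧ c s(x,u) = 0)).card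
  · obtain ⟨x, hx⟩ := hbig
    obtain ⟨N, hNsub, hNcard⟩ := Finset.exists_subset_card_eq hx
    have hxN : x ∉ N := fun hxN => ((Finset.mem_filter.mp (hNsub hxN)).2.1) rfl
    refine ⟨insert x N, ⟨1, ?_⟩, ?_⟩
    · intro a ha b hb hab
      have memN : ∀ y ∈ N, y ≠ x ∧ c s(x,y) = 0 := fun y hy =>
        (Finset.mem_filter.mp (hNsub hy)).2
      rcases Finset.mem_insert.mp ha with ha' | ha'
      · rcases Finset.mem_insert.mp hb with hb' | hb'
        · exact absurd (ha'.trans hb'.symm) hab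
        · subst ha'; rw [(memN b hb').2]; decide
      · rcases Finset.mem_insert.mp hb with hb' | hb'
        · subst hb'
          have : c s(b, a) = 0 := (memN a ha').2
          rw [Sym2.eq_swap, this]; decide
        · have h1 : c s(a, x) = 0 := by rw [Sym2.eq_swap]; exact (memN a ha').2
          exact key hcopy (memN a ha').1 (memN b hb').1.symm hab h1 (memN b hb').2
    · rw [Finset.card_insert_of_notMem hxN, hNcard]
      have h3 : (n : ℝ) ≤ ((s:ℝ)+1) * ((s:ℝ)+1) := by
        exact_mod_cast Nat.le_of_lt (Nat.lt_succ_sqrt n)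
      have h2 : Real.sqrt n ≤ ((s:ℝ)+1) := by
        rw [show ((s:ℝ)+1) = Real.sqrt (((s:ℝ)+1)^2) from (Real.sqrt_sq (by positivity)).symm]
        apply Real.sqrt_le_sqrt; nlinarith
      push_cast
      linarith
  · push_neg at hbig
    have hdeg : ∀ x : Fin n,
        (Finset.univ.filter (fun u => u ≠ x ∧ c s(x,u) = 0)).card + 1 ≤ s := by
      intro x; have := hbig x; omega
    obtain ⟨S, _, hSind, hScard⟩ :=
      greedy c hs1 hdeg (Finset.univ.card) Finset.univ le_rfl
    refine ⟨S, ⟨0, hSind⟩, ?_⟩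
    have hcardn : (Finset.univ : Finset (Fin n)).card = n := Finset.card_univ.trans (Fintype.card_fin n)
    rw [hcardn] at hScard
    have hsle : (s : ℝ) ≤ Real.sqrt n := by
      rw [show (s : ℝ) = Real.sqrt ((s : ℝ)^2) from (Real.sqrt_sq (by positivity)).symm]
      apply Real.sqrt_le_sqrt
      have h4 : (s:ℝ) ^ 2 ≤ n := by exact_mod_cast Nat.sqrt_le' n
      nlinarith
    have hnR : (n : ℝ) ≤ s * S.card := by exact_mod_cast hScard
    have hsq : Real.sqrt n * Real.sqrt n = n := Real.mul_self_sqrt (by positivity)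
    have hpos : (0 : ℝ) < Real.sqrt n := Real.sqrt_pos.mpr (by exact_mod_cast hn)
    nlinarith [hnR, hsq, hsle, Nat.cast_nonneg (α := ℝ) S.card]
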